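/- Let 𝒩_d be the qubit channel with Kraus operators K_+ = diag(cos((v−u)/2), cos((v+u)/2)) and K_− = [[0, sin((v−u)/2)],[sin((v+u)/2), 0]] for real u, v. Then the PDM R_AB = (1/2)𝒥[𝒩_d] (maximally mixed initial state) has eigenvalues (1/2, 1/2, (cos u cos v)/2, −(cos u cos v)/2), and hence S(R_AB) = 1. -/

import Mathlib

open Kronecker Matrix ComplexOrder

/-- Hermitian extension of the von Neumann entropy (base-2):
`S(X) = -Tr[X log₂|X|] = -∑ λᵢ log₂|λᵢ|` in terms of the eigenvalues of `X`. -/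
noncomputable def hermEntropy {n : Type*} [Fintype n] [DecidableEq n]
    {X : Matrix n n ℂ} (hX : X.IsHermitian) : ℝ :=
  -∑ i, hX.eigenvalues i * Real.logb 2 |hX.eigenvalues i|

/-- Jamiołkowski matrix `𝒥[𝒩] = ∑ᵢⱼ |i⟩⟨j| ⊗ 𝒩(|j⟩⟨i|)` of a map `𝒩`. -/
noncomputable def jam {n m : Type*} [Fintype n] [DecidableEq n]
    (𝒩 : Matrix n n ℂ → Matrix m m ℂ) : Matrix (n × m) (n × m) ℂ :=
  ∑ i : n, ∑ j : n, Matrix.single i j (1 : ℂ) ⊗ₖ 𝒩 (Matrix.single j i 1)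

/-- The pseudo-density matrix (spatiotemporal product)
`𝒩 ⋆ ρ = (1/2){ρ ⊗ 𝟙, 𝒥[𝒩]}`. -/
noncomputable def pdm {n m : Type*} [Fintype n] [DecidableEq n] [Fintype m] [DecidableEq m]
    (𝒩 : Matrix n n ℂ → Matrix m m ℂ) (ρ : Matrix n n ℂ) : Matrix (n × m) (n × m) ℂ :=
  (1 / 2 : ℂ) • ((ρ ⊗ₖ (1 : Matrix m m ℂ)) * jam 𝒩 + jam 𝒩 * (ρ ⊗ₖ (1 : Matrix m m ℂ)))

section Aux
open Polynomial

theorem my_charpoly_conj {n : Type*} [Fintype n] [DecidableEq n] (U A V : Matrix n n ℂ)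
    (hUV : U * V = 1) : (U * A * V).charpoly = A.charpoly := by
  have hUV' : U.map (C : ℂ →+* ℂ[X]) * V.map C = 1 := by
    rw [← Matrix.map_mul, hUV, Matrix.map_one _ (map_zero C) (map_one C)]
  have h1 : charmatrix (U * A * V) = U.map C * charmatrix A * V.map C := by
    unfold charmatrix
    simp only [RingHom.mapMatrix_apply, Matrix.map_mul]
    rw [mul_sub, sub_mul]
    congr 1
    rw [scalar_apply, ← Matrix.smul_one_eq_diagonal, mul_smul_comm, smul_mul_assoc, mul_one,
      hUV']
  rw [Matrix.charpoly, Matrix.charpoly, h1, det_mul, det_mul, mul_comm, ← mul_assoc,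
    ← det_mul, mul_eq_one_comm.mp hUV', det_one, one_mul]

theorem my_charpoly_herm {n : Type*} [Fintype n] [DecidableEq n] {A : Matrix n n ℂ}
    (hA : A.IsHermitian) :
    A.charpoly = ∏ i, (X - C ((hA.eigenvalues i : ℂ))) := by
  have hu : (hA.eigenvectorUnitary : Matrix n n ℂ) *
      (star hA.eigenvectorUnitary : Matrix n n ℂ) = 1 := by
    simpa using hA.eigenvectorUnitary.2.2
  have h2 := my_charpoly_conj (hA.eigenvectorUnitary : Matrix n n ℂ)
      (Matrix.diagonal (RCLike.ofReal ∘ hA.eigenvalues))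
      (star hA.eigenvectorUnitary : Matrix n n ℂ) hu
  have h3 := hA.spectral_theorem
  rw [Unitary.conjStarAlgAut_apply] at h3
  rw [← h3] at h2
  rw [h2, Matrix.charpoly]
  have : charmatrix (Matrix.diagonal (RCLike.ofReal ∘ hA.eigenvalues) : Matrix n n ℂ)
      = Matrix.diagonal fun i => (X - C ((hA.eigenvalues i : ℂ))) := by
    ext i j
    by_cases hij : i = j
    · subst hij; simp [charmatrix_apply_eq]
    · simp [charmatrix_apply_ne _ _ _ hij, Matrix.diagonal_apply_ne _ hij]
  rw [this, det_diagonal]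

lemma my_jam_apply {n m : Type*} [Fintype n] [DecidableEq n]
    (𝒩 : Matrix n n ℂ → Matrix m m ℂ) (i j : n) (p q : m) :
    jam 𝒩 (i, p) (j, q) = 𝒩 (Matrix.single j i 1) p q := by
  simp [jam, Matrix.sum_apply, Matrix.single, ite_and]

lemma my_charpoly_fin_two (B : Matrix (Fin 2) (Fin 2) ℂ) :
    B.charpoly = (X - C (B 0 0)) * (X - C (B 1 1)) - C (B 0 1) * C (B 1 0) := by
  have h : charmatrix B = !![X - C (B 0 0), -C (B 0 1); -C (B 1 0), X - C (B 1 1)] := by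
    ext i j
    fin_cases i <;> fin_cases j <;>
      simp [charmatrix_apply_eq, charmatrix_apply_ne]
  rw [Matrix.charpoly, h, Matrix.det_fin_two]
  simp

/-- The basis reordering `(0,0),(1,1) | (0,1),(1,0)`. -/
def myEquiv : Fin 2 × Fin 2 ≃ (Fin 2 ⊕ Fin 2) where
  toFun p := if p.1 = p.2 then Sum.inl p.1 else Sum.inr p.1
  invFun s := Sum.elim (fun i => (i, i)) (![(0, 1), (1, 0)] : Fin 2 → Fin 2 × Fin 2) s
  left_inv p := by fin_cases p <;> decide
  right_inv s := by rcases s with i | i <;> fin_cases i <;> decide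

end Aux

/-- For the qubit channel with Kraus operators
`K₊ = diag(cos((v−u)/2), cos((v+u)/2))` and `K₋ = [[0, sin((v−u)/2)],[sin((v+u)/2), 0]]`,
the PDM `R = (1/2)𝒥[𝒩_d]` (maximally mixed initial state) has eigenvalues
`(1/2, 1/2, (cos u cos v)/2, −(cos u cos v)/2)`, and hence `S(R) = 1`. -/
theorem pdm_choi_rank_two_spectrum (u v : ℝ)
    (Kp Km : Matrix (Fin 2) (Fin 2) ℂ)
    (hKp : Kp = !![(Real.cos ((v - u) / 2) : ℂ), 0; 0, (Real.cos ((v + u) / 2) : ℂ)])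
    (hKm : Km = !![0, (Real.sin ((v - u) / 2) : ℂ); (Real.sin ((v + u) / 2) : ℂ), 0])
    (hR : ((1 / 2 : ℂ) •
        jam (fun X => Kp * X * Kpᴴ + Km * X * Kmᴴ)).IsHermitian) :
    Multiset.map hR.eigenvalues Finset.univ.val =
      {1 / 2, 1 / 2, Real.cos u * Real.cos v / 2, -(Real.cos u * Real.cos v / 2)} ∧
      hermEntropy hR = 1 := by
  open Polynomial in
  set a : ℝ := Real.cos ((v - u) / 2) with ha
  set b : ℝ := Real.cos ((v + u) / 2) with hb
  set c : ℝ := Real.sin ((v - u) / 2) with hc0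
  set d : ℝ := Real.sin ((v + u) / 2) with hd0
  set K : ℝ := Real.cos u * Real.cos v with hK
  -- trig identities
  have h1 : a ^ 2 + b ^ 2 = 1 + K := by
    have t1 := Real.cos_two_mul ((v - u) / 2)
    have t2 := Real.cos_two_mul ((v + u) / 2)
    rw [show 2 * ((v - u) / 2) = v - u by ring, Real.cos_sub] at t1
    rw [show 2 * ((v + u) / 2) = v + u by ring, Real.cos_add] at t2
    rw [ha, hb, hK]
    linear_combination -(t1 + t2) / 2
  have hc : c ^ 2 = 1 - a ^ 2 := by
    have := Real.sin_sq_add_cos_sq ((v - u) / 2)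
    rw [ha, hc0]; linear_combination this
  have hd : d ^ 2 = 1 - b ^ 2 := by
    have := Real.sin_sq_add_cos_sq ((v + u) / 2)
    rw [hb, hd0]; linear_combination this
  -- the reindexed matrix is block diagonal
  have hRe : (Matrix.reindex myEquiv myEquiv
      ((1 / 2 : ℂ) • jam (fun X => Kp * X * Kpᴴ + Km * X * Kmᴴ))) =
      Matrix.fromBlocks !![(a^2/2 : ℂ), (c*d/2 : ℂ); (c*d/2 : ℂ), (b^2/2 : ℂ)] 0 0
        !![(d^2/2 : ℂ), (a*b/2 : ℂ); (a*b/2 : ℂ), (c^2/2 : ℂ)] := by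
    subst hKp hKm
    ext i j
    rcases i with i | i <;> rcases j with j | j <;> fin_cases i <;> fin_cases j <;>
    · simp only [Matrix.reindex_apply, Matrix.submatrix_apply, Matrix.smul_apply,
        myEquiv, Equiv.coe_fn_symm_mk, Sum.elim_inl, Sum.elim_inr,
        ← Prod.mk_zero_zero, ← Prod.mk_one_one, Matrix.cons_val_zero,
        Matrix.cons_val_one, Matrix.head_cons, Fin.zero_eta, Fin.mk_one, my_jam_apply]
      norm_num [Matrix.mul_apply, Fin.sum_univ_two, Matrix.single,
        Matrix.conjTranspose_apply, Matrix.vecMul, dotProduct,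
        Matrix.vecHead, Matrix.vecTail, Function.comp, Matrix.fromBlocks]
      try ring
  -- the characteristic polynomial
  have hch : ((1 / 2 : ℂ) • jam (fun X => Kp * X * Kpᴴ + Km * X * Kmᴴ)).charpoly =
      ((({1 / 2, 1 / 2, K / 2, -(K / 2)} : Multiset ℝ).map (fun r : ℝ => (r : ℂ))).map
        (fun z : ℂ => X - C z)).prod := by
    rw [← Matrix.charpoly_reindex myEquiv, hRe, Matrix.charpoly_fromBlocks_zero₁₂,
      my_charpoly_fin_two, my_charpoly_fin_two]
    simp only [Multiset.insert_eq_cons, Multiset.map_cons, Multiset.map_singleton,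
      Multiset.prod_cons, Multiset.prod_singleton, Matrix.cons_val', Matrix.cons_val_zero,
      Matrix.cons_val_one, Matrix.head_cons, Matrix.head_fin_const, Matrix.empty_val',
      Matrix.cons_val_fin_one, Matrix.of_apply]
    apply Polynomial.funext
    intro x
    have h1' : (a : ℂ) ^ 2 + (b : ℂ) ^ 2 = 1 + (K : ℂ) := by exact_mod_cast congrArg Complex.ofReal h1
    have hc' : (c : ℂ) ^ 2 = 1 - (a : ℂ) ^ 2 := by exact_mod_cast congrArg Complex.ofReal hc
    have hd' : (d : ℂ) ^ 2 = 1 - (b : ℂ) ^ 2 := by exact_mod_cast congrArg Complex.ofReal hd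
    simp only [eval_mul, eval_sub, eval_X, eval_C]
    push_cast
    linear_combination
      ((-(x/2) + 1/4) * ((x - (d:ℂ)^2/2) * (x - (c:ℂ)^2/2) - ((a:ℂ)*(b:ℂ)/2) * ((a:ℂ)*(b:ℂ)/2))
        + (x/2 - 1/4) * ((x - 1/2) * (x - (K:ℂ)/2))) * h1' +
      ((-((d:ℂ)^2)/4) * ((x - (d:ℂ)^2/2) * (x - (c:ℂ)^2/2) - ((a:ℂ)*(b:ℂ)/2) * ((a:ℂ)*(b:ℂ)/2))
        + (-(x/2) + (d:ℂ)^2/4) * ((x - 1/2) * (x - (K:ℂ)/2))) * hc' +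
      ((-(1-(a:ℂ)^2)/4) * ((x - (d:ℂ)^2/2) * (x - (c:ℂ)^2/2) - ((a:ℂ)*(b:ℂ)/2) * ((a:ℂ)*(b:ℂ)/2))
        + (-(x/2) + (1-(a:ℂ)^2)/4) * ((x - 1/2) * (x - (K:ℂ)/2))) * hd'
  -- identify the eigenvalue multiset via roots of the characteristic polynomial
  have hherm := my_charpoly_herm hR
  have hprod : ((Finset.univ.val.map (fun i => (hR.eigenvalues i : ℂ))).map
      (fun z : ℂ => X - C z)).prod =
      ((({1 / 2, 1 / 2, K / 2, -(K / 2)} : Multiset ℝ).map (fun r : ℝ => (r : ℂ))).map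
        (fun z : ℂ => X - C z)).prod := by
    rw [Multiset.map_map, ← hch, hherm, Finset.prod_eq_multiset_prod]
    rfl
  have heig : Finset.univ.val.map (fun i => (hR.eigenvalues i : ℂ)) =
      ({1 / 2, 1 / 2, K / 2, -(K / 2)} : Multiset ℝ).map (fun r : ℝ => (r : ℂ)) := by
    have := congrArg Polynomial.roots hprod
    rwa [Polynomial.roots_multiset_prod_X_sub_C, Polynomial.roots_multiset_prod_X_sub_C] at this
  have hms : Multiset.map hR.eigenvalues Finset.univ.val =
      ({1 / 2, 1 / 2, K / 2, -(K / 2)} : Multiset ℝ) := by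
    apply Multiset.map_injective (f := (fun r : ℝ => (r : ℂ))) (fun x y h => Complex.ofReal_injective h)
    rw [Multiset.map_map]
    exact heig
  refine ⟨hms, ?_⟩
  have hsum : ∑ i, hR.eigenvalues i * Real.logb 2 |hR.eigenvalues i| =
      ((Multiset.map hR.eigenvalues Finset.univ.val).map
        (fun t : ℝ => t * Real.logb 2 |t|)).sum := by
    rw [Multiset.map_map]
    rfl
  rw [hermEntropy, hsum, hms]
  have hlog : Real.logb 2 |(1 / 2 : ℝ)| = -1 := by
    rw [abs_of_pos (by norm_num), show (1/2 : ℝ) = 2⁻¹ by norm_num, Real.logb_inv,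
      Real.logb_self_eq_one (by norm_num)]
  simp only [Multiset.insert_eq_cons, Multiset.map_cons, Multiset.map_singleton,
    Multiset.sum_cons, Multiset.sum_singleton, hlog, abs_neg]
  ring
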